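/- The element x = (1, (3^{|m|})_{m∈ℤ}) belongs to 𝐙 and is divisible by 2 in 𝐐 (indeed (1/2, (3^{|m|}/2)_{m∈ℤ}) ∈ 𝐐), but x is not divisible by 2 in 𝐙. Consequently 𝐙 is not a pure subgroup of 𝐐, and the short exact sequence 0 → 𝐙 → 𝐐 → 𝐐/𝐙 → 0 is not a pure extension of abelian groups. -/
import Mathlib


noncomputable section

/-- The group 𝐐: subgroup of ℚ ⊕ ∏_{m∈ℤ} ℚ of pairs (a, (a_m)) with
a_m = 3^{|m|}·a for all but finitely many m. -/
def bbQ : AddSubgroup (ℚ × (ℤ → ℚ)) where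
  carrier := {x | {m : ℤ | x.2 m ≠ 3 ^ m.natAbs * x.1}.Finite}
  zero_mem' := by
    have : {m : ℤ | (0 : ℚ × (ℤ → ℚ)).2 m ≠ 3 ^ m.natAbs * (0 : ℚ × (ℤ → ℚ)).1} = ∅ := by
      ext m; simp
    simp only [Set.mem_setOf_eq, this]
    exact Set.finite_empty
  add_mem' := by
    intro x y hx hy
    refine Set.Finite.subset (Set.Finite.union hx hy) ?_
    intro m hm
    simp only [Set.mem_setOf_eq, Set.mem_union]
    by_contra h
    push_neg at h
    apply hm
    show (x + y).2 m = 3 ^ m.natAbs * (x + y).1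
    have : (x + y).2 m = x.2 m + y.2 m := rfl
    rw [this, h.1, h.2]
    show _ = 3 ^ m.natAbs * (x.1 + y.1)
    ring
  neg_mem' := by
    intro x hx
    refine Set.Finite.subset hx ?_
    intro m hm
    simp only [Set.mem_setOf_eq] at hm ⊢
    intro h
    apply hm
    have h2 : (-x).2 m = -(x.2 m) := rfl
    have h1 : (-x).1 = -x.1 := rfl
    rw [h2, h1, h]
    ring

lemma mem_bbQ {x : ℚ × (ℤ → ℚ)} :
    x ∈ bbQ ↔ {m : ℤ | x.2 m ≠ 3 ^ m.natAbs * x.1}.Finite := Iff.rfl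

/-- The group 𝐙: subgroup of 𝐐 of pairs (a, (a_m)) with a ∈ ℤ[1/3] and each a_m ∈ ℤ. -/
def bbZ : AddSubgroup (ℚ × (ℤ → ℚ)) where
  carrier := {x | x ∈ bbQ ∧ (∃ k : ℤ, ∃ j : ℕ, x.1 = (k : ℚ) / 3 ^ j) ∧
    ∀ m : ℤ, ∃ n : ℤ, x.2 m = (n : ℚ)}
  zero_mem' := by
    refine ⟨zero_mem _, ⟨0, 0, by norm_num⟩, fun m => ⟨0, rfl⟩⟩
  add_mem' := by
    rintro x y ⟨hxQ, ⟨k, j, hk⟩, hxi⟩ ⟨hyQ, ⟨k', j', hk'⟩, hyi⟩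
    refine ⟨add_mem hxQ hyQ, ⟨k * 3 ^ j' + k' * 3 ^ j, j + j', ?_⟩, fun m => ?_⟩
    · show x.1 + y.1 = _
      rw [hk, hk']
      push_cast
      rw [pow_add]
      field_simp
    · obtain ⟨n, hn⟩ := hxi m
      obtain ⟨n', hn'⟩ := hyi m
      exact ⟨n + n', by show x.2 m + y.2 m = _; rw [hn, hn']; push_cast; ring⟩
  neg_mem' := by
    rintro x ⟨hxQ, ⟨k, j, hk⟩, hxi⟩
    refine ⟨neg_mem hxQ, ⟨-k, j, ?_⟩, fun m => ?_⟩
    · show -x.1 = _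
      rw [hk]; push_cast; ring
    · obtain ⟨n, hn⟩ := hxi m
      exact ⟨-n, by show -(x.2 m) = _; rw [hn]; push_cast; ring⟩

/-- The element x = (1, (3^{|m|})_m) lies in 𝐙 and is divisible by 2 in 𝐐
(with witness (1/2, (3^{|m|}/2)_m) ∈ 𝐐), but is not divisible by 2 in 𝐙.  Consequently 𝐙 is
not a pure subgroup of 𝐐, i.e. the extension 0 → 𝐙 → 𝐐 → 𝐐/𝐙 → 0 is not pure. -/
theorem bbZ_not_pure_in_bbQ :
    (((1 : ℚ), fun m : ℤ => ((3 : ℚ) ^ m.natAbs)) ∈ bbZ) ∧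
    (((1 / 2 : ℚ), fun m : ℤ => ((3 : ℚ) ^ m.natAbs / 2)) ∈ bbQ) ∧
    ((2 : ℕ) • ((1 / 2 : ℚ), fun m : ℤ => ((3 : ℚ) ^ m.natAbs / 2))
      = ((1 : ℚ), fun m : ℤ => ((3 : ℚ) ^ m.natAbs))) ∧
    (¬ ∃ y ∈ bbZ, (2 : ℕ) • y = ((1 : ℚ), fun m : ℤ => ((3 : ℚ) ^ m.natAbs))) ∧
    ¬ (∀ n : ℕ, ∀ x ∈ bbZ, (∃ y ∈ bbQ, n • y = x) → ∃ z ∈ bbZ, n • z = x) := by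

  have hxZ : (((1 : ℚ), fun m : ℤ => ((3 : ℚ) ^ m.natAbs)) ∈ bbZ) := by
    refine ⟨?_, ⟨1, 0, by norm_num⟩, fun m => ⟨3 ^ m.natAbs, by push_cast; rfl⟩⟩
    have : {m : ℤ | ((1 : ℚ), fun m : ℤ => ((3:ℚ) ^ m.natAbs)).2 m ≠ 3 ^ m.natAbs * (1:ℚ)} = ∅ := by
      ext m; simp
    show Set.Finite _
    rw [this]; exact Set.finite_empty
  have hyQ : (((1 / 2 : ℚ), fun m : ℤ => ((3 : ℚ) ^ m.natAbs / 2)) ∈ bbQ) := by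
    have : {m : ℤ | ((1/2 : ℚ), fun m : ℤ => ((3:ℚ) ^ m.natAbs / 2)).2 m ≠ 3 ^ m.natAbs * (1/2:ℚ)} = ∅ := by
      ext m; simp [mul_comm, div_eq_mul_inv, mul_assoc]
    show Set.Finite _
    rw [this]; exact Set.finite_empty
  have hsmul : ((2 : ℕ) • ((1 / 2 : ℚ), fun m : ℤ => ((3 : ℚ) ^ m.natAbs / 2))
      = ((1 : ℚ), fun m : ℤ => ((3 : ℚ) ^ m.natAbs))) := by
    ext
    · norm_num
    · simp only [Prod.smul_snd, Pi.smul_apply, smul_eq_mul]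
      ring
  have hnot : ¬ ∃ y ∈ bbZ, (2 : ℕ) • y = ((1 : ℚ), fun m : ℤ => ((3 : ℚ) ^ m.natAbs)) := by
    rintro ⟨y, ⟨-, -, hyi⟩, hy⟩
    obtain ⟨n, hn⟩ := hyi 0
    have h2 : (2 : ℚ) * y.2 0 = (fun m : ℤ => ((3 : ℚ) ^ m.natAbs)) 0 := by
      have := congrArg (fun z : ℚ × (ℤ → ℚ) => z.2 0) hy
      simpa [two_mul] using this
    simp only [Int.natAbs_zero, pow_zero] at h2
    rw [hn] at h2
    have : (2 * n : ℤ) = 1 := by exact_mod_cast h2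
    omega
  exact ⟨hxZ, hyQ, hsmul, hnot, fun h => hnot (h 2 _ hxZ ⟨_, hyQ, hsmul⟩)⟩


end
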